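/- Let n, m ≥ 1 and β ≥ 0. Define on ℝ^n × ℝ^m the quasi-distance ρ((x,y),(x',y')) = |x-x'| + |y-y'| / ((|x|+|x'|)^β + |y-y'|^{β/(β+1)}). Then there exist constants 0 < c₁ < c₂ depending only on n, m, β such that for every (x,y) with x ≠ 0: B_n(x, c₁|x|) × B_m(y, c₁|x|^{β+1}) ⊆ {η : ρ((x,y), η) < |x|} ⊆ B_n(x, c₂|x|) × B_m(y, c₂|x|^{β+1}), where B_n, B_m denote Euclidean balls in ℝ^n, ℝ^m. -/
import Mathlib

open Metric

/-- Grushin balls are comparable to Euclidean product boxes: with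
`ρ((x,y),(x',y')) = |x-x'| + |y-y'| / ((|x|+|x'|)^β + |y-y'|^{β/(β+1)})`,
for every `(x,y)` with `x ≠ 0`,
`Bₙ(x,c₁|x|) × Bₘ(y,c₁|x|^{β+1}) ⊆ {ρ < |x|} ⊆ Bₙ(x,c₂|x|) × Bₘ(y,c₂|x|^{β+1})`. -/
theorem stmt_8 (n m : ℕ) (hn : 1 ≤ n) (hm : 1 ≤ m) (β : ℝ) (hβ : 0 ≤ β) :
    ∃ c₁ c₂ : ℝ, 0 < c₁ ∧ c₁ < c₂ ∧
      ∀ (x : EuclideanSpace ℝ (Fin n)) (y : EuclideanSpace ℝ (Fin m)), x ≠ 0 →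
        (ball x (c₁ * ‖x‖)) ×ˢ (ball y (c₁ * ‖x‖ ^ (β + 1))) ⊆
            {η : EuclideanSpace ℝ (Fin n) × EuclideanSpace ℝ (Fin m) |
              ‖x - η.1‖ + ‖y - η.2‖ /
                ((‖x‖ + ‖η.1‖) ^ β + ‖y - η.2‖ ^ (β / (β + 1))) < ‖x‖} ∧
          {η : EuclideanSpace ℝ (Fin n) × EuclideanSpace ℝ (Fin m) |
              ‖x - η.1‖ + ‖y - η.2‖ /
                ((‖x‖ + ‖η.1‖) ^ β + ‖y - η.2‖ ^ (β / (β + 1))) < ‖x‖} ⊆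
            (ball x (c₂ * ‖x‖)) ×ˢ (ball y (c₂ * ‖x‖ ^ (β + 1))) := by
  have hβ1 : (0:ℝ) < β + 1 := by linarith
  set K : ℝ := (3:ℝ) ^ β + 1 with hK
  have hKpos : 0 < K := by positivity
  have hK1 : (1:ℝ) ≤ K := by
    have : (0:ℝ) ≤ (3:ℝ) ^ β := by positivity
    linarith
  have hc2ge : (1:ℝ) ≤ K ^ (β+1) := by
    calc (1:ℝ) = 1 ^ (β+1) := (Real.one_rpow _).symm
      _ ≤ K ^ (β+1) := Real.rpow_le_rpow zero_le_one hK1 hβ1.le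
  refine ⟨1/4, K ^ (β + 1) + 1, by norm_num, by linarith, ?_⟩
  intro x y hx
  have hX : (0:ℝ) < ‖x‖ := norm_pos_iff.mpr hx
  have hXβ : (0:ℝ) < ‖x‖ ^ β := Real.rpow_pos_of_pos hX β
  constructor
  · -- first inclusion
    rintro ⟨x', y'⟩ ⟨h1, h2⟩
    simp only [mem_ball] at h1 h2
    have ha : ‖x - x'‖ < 1/4 * ‖x‖ := by
      rwa [dist_eq_norm, norm_sub_rev] at h1
    have hd : ‖y - y'‖ < 1/4 * ‖x‖ ^ (β+1) := by
      rwa [dist_eq_norm, norm_sub_rev] at h2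
    have hd0 : (0:ℝ) ≤ ‖y - y'‖ := norm_nonneg _
    set D : ℝ := (‖x‖ + ‖x'‖) ^ β + ‖y - y'‖ ^ (β / (β + 1)) with hD
    have hDge : ‖x‖ ^ β ≤ D := by
      have h1' : ‖x‖ ^ β ≤ (‖x‖ + ‖x'‖) ^ β :=
        Real.rpow_le_rpow hX.le (le_add_of_nonneg_right (norm_nonneg _)) hβ
      have h2' : (0:ℝ) ≤ ‖y - y'‖ ^ (β / (β + 1)) := Real.rpow_nonneg hd0 _
      rw [hD]; linarith
    have hDpos : 0 < D := lt_of_lt_of_le hXβ hDge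
    have key : ‖y - y'‖ / D ≤ ‖y - y'‖ / ‖x‖ ^ β := by gcongr
    have key2 : ‖y - y'‖ / ‖x‖ ^ β < 1/4 * ‖x‖ := by
      rw [div_lt_iff₀ hXβ]
      calc ‖y - y'‖ < 1/4 * ‖x‖ ^ (β+1) := hd
        _ = 1/4 * ‖x‖ * ‖x‖ ^ β := by rw [Real.rpow_add hX, Real.rpow_one]; ring
    show ‖x - x'‖ + ‖y - y'‖ / D < ‖x‖
    have := key.trans_lt key2
    linarith
  · -- second inclusion
    rintro ⟨x', y'⟩ hρ
    simp only [Set.mem_setOf_eq] at hρ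
    set d : ℝ := ‖y - y'‖ with hdd
    have hd0 : (0:ℝ) ≤ d := norm_nonneg _
    set D : ℝ := (‖x‖ + ‖x'‖) ^ β + d ^ (β / (β + 1)) with hD
    have hDge : ‖x‖ ^ β ≤ D := by
      have h1' : ‖x‖ ^ β ≤ (‖x‖ + ‖x'‖) ^ β :=
        Real.rpow_le_rpow hX.le (le_add_of_nonneg_right (norm_nonneg _)) hβ
      have h2' : (0:ℝ) ≤ d ^ (β / (β + 1)) := Real.rpow_nonneg hd0 _
      rw [hD]; linarith
    have hDpos : 0 < D := lt_of_lt_of_le hXβ hDge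
    have hfrac : (0:ℝ) ≤ d / D := div_nonneg hd0 hDpos.le
    have ha : ‖x - x'‖ < ‖x‖ := by linarith [hρ]
    constructor
    · simp only [mem_ball, dist_eq_norm]
      rw [norm_sub_rev]
      nlinarith
    · simp only [mem_ball, dist_eq_norm]
      rw [norm_sub_rev]
      show d < (K ^ (β+1) + 1) * ‖x‖ ^ (β+1)
      have hXβ1 : (0:ℝ) < ‖x‖ ^ (β+1) := Real.rpow_pos_of_pos hX _
      rcases le_or_gt d (‖x‖ ^ (β+1)) with hcase | hcase
      · nlinarith
      · have hdpos : 0 < d := lt_trans hXβ1 hcase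
        have hγpos : 0 < d ^ (β/(β+1)) := Real.rpow_pos_of_pos hdpos _
        have hdiv : d / D < ‖x‖ := by linarith [norm_nonneg (x - x')]
        have hdlt : d < ‖x‖ * D := (div_lt_iff₀ hDpos).mp hdiv
        have hx' : ‖x'‖ < 2 * ‖x‖ := by
          have h : ‖x'‖ ≤ ‖x‖ + ‖x - x'‖ := by
            calc ‖x'‖ = ‖x - (x - x')‖ := by rw [sub_sub_cancel]
              _ ≤ ‖x‖ + ‖x - x'‖ := norm_sub_le _ _
          linarith
        have hsum : (‖x‖ + ‖x'‖) ^ β ≤ (3:ℝ) ^ β * ‖x‖ ^ β := by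
          rw [← Real.mul_rpow (by norm_num) hX.le]
          exact Real.rpow_le_rpow (by positivity) (by linarith) hβ
        have hXd : ‖x‖ ^ β ≤ d ^ (β/(β+1)) := by
          have h1 : (‖x‖ ^ (β+1)) ^ (β/(β+1)) ≤ d ^ (β/(β+1)) :=
            Real.rpow_le_rpow hXβ1.le hcase.le (by positivity)
          rwa [← Real.rpow_mul hX.le,
            show (β+1) * (β/(β+1)) = β by field_simp] at h1
        have hdK : d < K * ‖x‖ * d ^ (β/(β+1)) := by
          have h1 : ‖x‖ * (‖x‖ + ‖x'‖) ^ β ≤ ‖x‖ * ((3:ℝ)^β * ‖x‖^β) :=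
            mul_le_mul_of_nonneg_left hsum hX.le
          have h2 : (3:ℝ)^β * ‖x‖^β ≤ (3:ℝ)^β * d ^ (β/(β+1)) :=
            mul_le_mul_of_nonneg_left hXd (by positivity)
          calc d < ‖x‖ * D := hdlt
            _ ≤ ‖x‖ * ((3:ℝ)^β * d ^ (β/(β+1)) + d ^ (β/(β+1))) := by
                rw [hD]; nlinarith
            _ = K * ‖x‖ * d ^ (β/(β+1)) := by rw [hK]; ring
        have hroot : d ^ (1/(β+1)) < K * ‖x‖ := by
          calc d ^ (1/(β+1)) = d / d ^ (β/(β+1)) := by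
                rw [eq_div_iff hγpos.ne', ← Real.rpow_add hdpos,
                  show 1/(β+1) + β/(β+1) = 1 by field_simp; ring, Real.rpow_one]
            _ < K * ‖x‖ * d ^ (β/(β+1)) / d ^ (β/(β+1)) :=
                (div_lt_div_iff_of_pos_right hγpos).mpr hdK
            _ = K * ‖x‖ := by
                rw [mul_div_assoc, div_self hγpos.ne', mul_one]
        have hfin : d < (K * ‖x‖) ^ (β+1) := by
          have h1 : (d ^ (1/(β+1))) ^ (β+1) < (K * ‖x‖) ^ (β+1) :=
            Real.rpow_lt_rpow (by positivity) hroot hβ1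
          rwa [← Real.rpow_mul hdpos.le,
            show 1/(β+1) * (β+1) = 1 by field_simp, Real.rpow_one] at h1
        rw [Real.mul_rpow hKpos.le hX.le] at hfin
        nlinarith
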